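/- arXiv:math/0502027 — 2 statements merged into one kernel-verified Lean document; each statement's English description precedes it below -/
import Mathlib

section
/- Define f * g := Σ_{k=0}^{m} g^{(k)}(0) f^{(m−k)} for polynomials f, g of the same degree m > 0. For f, g in P_n with deg f = m and deg g = n, one has f * (D^{n−m} g) = f ⋆ g. -/
open Polynomial

/-- `P n` is the space of complex polynomials of degree at most `n`. -/
noncomputable def Pn (n : ℕ) : Submodule ℂ (Polynomial ℂ) := Polynomial.degreeLT ℂ (n + 1)

noncomputable instance instPnEndAddCommGroup (n : ℕ) : AddCommGroup (Module.End ℂ (Pn n)) :=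
  LinearMap.addCommGroup

noncomputable instance instPnEndRing (n : ℕ) : Ring (Module.End ℂ (Pn n)) := Module.End.instRing

/-- The differentiation operator on `Pn n`. -/
noncomputable def Dop (n : ℕ) : Module.End ℂ (Pn n) :=
  (Polynomial.derivative (R := ℂ)).restrict (p := Pn n) (q := Pn n)
    (fun f hf => by
      simp only [Pn, Polynomial.mem_degreeLT] at *
      exact lt_of_le_of_lt (Polynomial.degree_derivative_le) hf)

/-- `calD n` is the span of `I, D, D^2, ..., D^n` in `L(Pn n)`. -/
noncomputable def calD (n : ℕ) : Submodule ℂ (Module.End ℂ (Pn n)) :=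
  Submodule.span ℂ (Set.range fun k : Fin (n + 1) => (Dop n) ^ (k : ℕ))

/-- `φ_k(z) = z^k / k!` as an element of `Pn n` (for `k ≤ n`). -/
noncomputable def phiP (n k : ℕ) (h : k ≤ n) : Pn n :=
  ⟨Polynomial.C (((Nat.factorial k : ℂ))⁻¹) * Polynomial.X ^ k, by
    rw [Pn, Polynomial.mem_degreeLT]
    exact lt_of_le_of_lt (Polynomial.degree_C_mul_X_pow_le _ _)
      (by exact_mod_cast Nat.lt_succ_of_le h)⟩

/-- The `*`-product of two polynomials of the same degree `m`:
`(f * g)(z) := Σ_{k=0}^{m} g^{(k)}(0) f^{(m-k)}(z)`. -/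
noncomputable def starAst (m : ℕ) (f g : Polynomial ℂ) : Polynomial ℂ :=
  ∑ k ∈ Finset.range (m + 1),
    Polynomial.C ((Polynomial.derivative^[k] g).eval 0) * (Polynomial.derivative^[m - k] f)

-- helper lemmas
lemma iter_deriv_phi (n s : ℕ) :
    derivative^[s] (C ((n.factorial:ℂ)⁻¹) * X^n) =
      C ((n.factorial:ℂ)⁻¹ * (n.descFactorial s : ℂ)) * X^(n-s) := by
  rw [Polynomial.iterate_derivative_C_mul, Polynomial.iterate_derivative_X_pow_eq_C_mul,
    ← mul_assoc, ← C_mul]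

lemma iter_deriv_phi_zero (n s : ℕ) (h : n < s) :
    derivative^[s] (C ((n.factorial:ℂ)⁻¹) * X^n) = 0 := by
  rw [iter_deriv_phi, Nat.descFactorial_eq_zero_iff_lt.mpr h]
  simp

lemma eval_iter_deriv_phi (n s : ℕ) :
    ((derivative^[s] (C ((n.factorial:ℂ)⁻¹) * X^n))).eval 0 = if s = n then 1 else 0 := by
  rw [iter_deriv_phi]
  rcases lt_trichotomy s n with h | rfl | h
  · simp [Nat.sub_ne_zero_of_lt h, h.ne, zero_pow]
  · simp [Nat.descFactorial_self]
    rw [inv_mul_cancel₀]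
    exact_mod_cast Nat.factorial_ne_zero _
  · rw [Nat.descFactorial_eq_zero_iff_lt.mpr h]
    simp [h.ne']

lemma coe_Dop_pow (n k : ℕ) (p : Pn n) :
    ((((Dop n) ^ k) p : Pn n) : Polynomial ℂ) = derivative^[k] (p : Polynomial ℂ) := by
  induction k with
  | zero => simp
  | succ k ih =>
    rw [pow_succ', Module.End.mul_apply, Function.iterate_succ_apply', ← ih]
    rfl

/-- For `f, g ∈ P_n` with `deg f = m > 0` and `deg g = n`:
`f * (D^{n-m} g) = f ⋆ g`, where `f ⋆ g = (F * G) φ_n` with `F, G ∈ 𝒟(P_n)`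
satisfying `Fφ_n = f`, `Gφ_n = g`. -/
theorem ast_iterate_deriv_eq_star (n : ℕ) (hn : 0 < n) (m : ℕ) (hm : 0 < m)
    (F G : Module.End ℂ (Pn n)) (hF : F ∈ calD n) (hG : G ∈ calD n)
    (f g : Pn n) (hFf : F (phiP n n le_rfl) = f) (hGg : G (phiP n n le_rfl) = g)
    (hdegf : (f : Polynomial ℂ).degree = (m : ℕ))
    (hdegg : (g : Polynomial ℂ).degree = (n : ℕ)) :
    starAst m (f : Polynomial ℂ) (Polynomial.derivative^[n - m] (g : Polynomial ℂ)) =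
      (((F * G) (phiP n n le_rfl) : Pn n) : Polynomial ℂ) := by
  classical
  have hmn : m ≤ n := by
    have h2 : (f : Polynomial ℂ) ∈ Polynomial.degreeLT ℂ (n+1) := f.2
    rw [Polynomial.mem_degreeLT, hdegf] at h2
    exact_mod_cast Nat.lt_succ_iff.mp (by exact_mod_cast h2)
  obtain ⟨a, ha⟩ := (Submodule.mem_span_range_iff_exists_fun ℂ).mp hF
  obtain ⟨b, hb⟩ := (Submodule.mem_span_range_iff_exists_fun ℂ).mp hG
  set φ : Polynomial ℂ := C ((n.factorial:ℂ)⁻¹) * X^n with hφdef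
  have hΦ : ((phiP n n le_rfl : Pn n) : Polynomial ℂ) = φ := rfl
  set A : ℕ → ℂ := fun j => if h : j < n+1 then a ⟨j, h⟩ else 0 with hAdef
  set B : ℕ → ℂ := fun j => if h : j < n+1 then b ⟨j, h⟩ else 0 with hBdef
  have key : ∀ (c : Fin (n+1) → ℂ) (Cc : ℕ → ℂ) (hCc : Cc = fun j => if h : j < n+1 then c ⟨j, h⟩ else 0)
      (T : Module.End ℂ (Pn n)), (∑ i, c i • Dop n ^ (i:ℕ)) = T → ∀ p : Pn n,
      ((T p : Pn n) : Polynomial ℂ) =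
        ∑ j ∈ Finset.range (n+1), Cc j • derivative^[j] (p : Polynomial ℂ) := by
    intro c Cc hCc T hT p
    rw [← hT, LinearMap.sum_apply]
    rw [Finset.sum_range]
    push_cast [AddSubmonoid.coe_finset_sum]
    refine Finset.sum_congr rfl fun i _ => ?_
    rw [hCc]
    simp [coe_Dop_pow, Fin.is_lt]
    intro h; exact absurd i.is_lt (by omega)
  have hA := key a A hAdef F ha
  have hB := key b B hBdef G hb
  have hf' : (f : Polynomial ℂ) = ∑ j ∈ Finset.range (n+1), A j • derivative^[j] φ := by
    rw [← hFf, hA, hΦ]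
  have hg' : (g : Polynomial ℂ) = ∑ j ∈ Finset.range (n+1), B j • derivative^[j] φ := by
    rw [← hGg, hB, hΦ]
  -- A j = 0 for j < n - m
  have hA0 : ∀ j, j < n - m → A j = 0 := by
    intro j hj
    have hjn : j < n + 1 := by omega
    have hc : (f : Polynomial ℂ).coeff (n - j) = 0 :=
      Polynomial.coeff_eq_zero_of_degree_lt (by rw [hdegf]; exact_mod_cast (by omega : m < n - j))
    rw [hf'] at hc
    rw [Polynomial.finset_sum_coeff] at hc
    have : ∀ i ∈ Finset.range (n+1),
        (A i • derivative^[i] φ).coeff (n - j)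
          = if i = j then A i * ((n.factorial:ℂ)⁻¹ * (n.descFactorial i : ℂ)) else 0 := by
      intro i hi
      simp only [Finset.mem_range] at hi
      rw [hφdef, iter_deriv_phi, Polynomial.coeff_smul, Polynomial.coeff_C_mul,
        Polynomial.coeff_X_pow]
      have : (n - j = n - i) ↔ (i = j) := by omega
      rw [if_congr this rfl rfl]
      split <;> simp [smul_eq_mul, mul_comm, mul_assoc, mul_left_comm]
    rw [Finset.sum_congr rfl this, Finset.sum_ite_eq' _ j _] at hc
    rw [if_pos (Finset.mem_range.mpr hjn)] at hc
    have hne : ((n.factorial:ℂ)⁻¹ * (n.descFactorial j : ℂ)) ≠ 0 := by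
      apply mul_ne_zero
      · exact inv_ne_zero (by exact_mod_cast Nat.factorial_ne_zero _)
      · have : n.descFactorial j ≠ 0 := by
          rw [Ne, Nat.descFactorial_eq_zero_iff_lt]; omega
        exact_mod_cast this
    exact (mul_eq_zero.mp hc).resolve_right hne
  -- the building block
  set T : ℕ → Polynomial ℂ :=
    fun k => ∑ j ∈ Finset.range (n+1), A j • B k • derivative^[j + k] φ with hTdef
  have hgΦ : ((G (phiP n n le_rfl) : Pn n) : Polynomial ℂ)
      = ∑ k ∈ Finset.range (n+1), B k • derivative^[k] φ := by rw [hB, hΦ]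
  have hRHS : (((F * G) (phiP n n le_rfl) : Pn n) : Polynomial ℂ)
      = ∑ k ∈ Finset.range (n+1), T k := by
    calc (((F * G) (phiP n n le_rfl) : Pn n) : Polynomial ℂ)
        = ∑ j ∈ Finset.range (n+1),
            A j • derivative^[j] ((G (phiP n n le_rfl) : Pn n) : Polynomial ℂ) := by
          rw [Module.End.mul_apply]; exact hA _
      _ = ∑ j ∈ Finset.range (n+1), ∑ k ∈ Finset.range (n+1),
            A j • B k • derivative^[j+k] φ := by
          refine Finset.sum_congr rfl fun j _ => ?_
          rw [hgΦ, Polynomial.iterate_derivative_sum, Finset.smul_sum]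
          refine Finset.sum_congr rfl fun k _ => ?_
          rw [Polynomial.iterate_derivative_smul, ← Function.iterate_add_apply]
      _ = ∑ k ∈ Finset.range (n+1), T k := by rw [Finset.sum_comm]
  have heval : ∀ k, k ≤ m →
      ((derivative^[k] (derivative^[n-m] (g : Polynomial ℂ))).eval 0) = B (m-k) := by
    intro k hk
    rw [← Function.iterate_add_apply, hg', Polynomial.iterate_derivative_sum,
      Polynomial.eval_finset_sum]
    have step : ∀ l ∈ Finset.range (n+1),
        (derivative^[k+(n-m)] (B l • derivative^[l] φ)).eval 0
          = if l = m-k then B l else 0 := by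
      intro l hl
      rw [Polynomial.iterate_derivative_smul, ← Function.iterate_add_apply, hφdef,
        Polynomial.eval_smul, eval_iter_deriv_phi]
      have hcond : (k+(n-m)+l = n) ↔ (l = m-k) := by
        simp only [Finset.mem_range] at hl; omega
      rw [if_congr hcond rfl rfl]
      split <;> simp
    rw [Finset.sum_congr rfl step, Finset.sum_ite_eq' _ (m-k) _,
      if_pos (Finset.mem_range.mpr (by omega))]
  have hDf : ∀ k, k ≤ m → derivative^[m-k] (f : Polynomial ℂ)
      = ∑ j ∈ Finset.range (n+1), A j • derivative^[j + (m-k)] φ := by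
    intro k hk
    rw [hf', Polynomial.iterate_derivative_sum]
    refine Finset.sum_congr rfl fun j _ => ?_
    rw [Polynomial.iterate_derivative_smul, ← Function.iterate_add_apply, Nat.add_comm]
  calc starAst m (f : Polynomial ℂ) (derivative^[n - m] (g : Polynomial ℂ))
      = ∑ k ∈ Finset.range (m+1), T (m-k) := by
        unfold starAst
        refine Finset.sum_congr rfl fun k hk => ?_
        simp only [Finset.mem_range] at hk
        rw [heval k (by omega), hDf k (by omega), hTdef, Finset.mul_sum]
        refine Finset.sum_congr rfl fun j _ => ?_
        simp only [smul_smul, Polynomial.smul_eq_C_mul, Polynomial.C_mul]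
        ring
    _ = ∑ k ∈ Finset.range (m+1), T k := by
        have := Finset.sum_range_reflect T (m+1)
        simpa using this
    _ = ∑ k ∈ Finset.range (n+1), T k := by
        refine Finset.sum_subset (Finset.range_subset_range.mpr (by omega)) ?_
        intro x hx hnx
        simp only [Finset.mem_range, not_lt] at hx hnx
        rw [hTdef]
        refine Finset.sum_eq_zero fun j hj => ?_
        rcases lt_or_ge j (n-m) with h | h
        · rw [hA0 j h, zero_smul]
        · rw [hφdef, iter_deriv_phi_zero n _ (by omega), smul_zero, smul_zero]
    _ = (((F * G) (phiP n n le_rfl) : Pn n) : Polynomial ℂ) := hRHS.symm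
end

section
/- Let T : P_n → P_n be a nonzero linear operator such that there exists C > 0 with: for every nonconstant f ∈ P_n there exist a root u of f and a root v of Tf with |u − v| ≤ C. Then deg(Tφ_m) = m for every m = 0, ..., n; in particular the matrix of T in the basis {1, z, z²/2!, ..., zⁿ/n!} is upper triangular with all diagonal entries equal to the nonzero constant Tφ_0. -/
open Polynomial Finset

noncomputable def phi' (n j : ℕ) : Pn n := if h : j ≤ n then phiP n j h else 0

lemma coe_phi' {n j : ℕ} (h : j ≤ n) :
    ((phi' n j : Pn n) : Polynomial ℂ) = C ((j.factorial : ℂ))⁻¹ * X ^ j := by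
  simp [phi', h, phiP]

lemma natDegree_le_of_mem {n : ℕ} (x : Pn n) : (x : Polynomial ℂ).natDegree ≤ n := by
  have hx := Polynomial.mem_degreeLT.mp x.2
  refine Polynomial.natDegree_le_iff_degree_le.mpr ?_
  rcases eq_or_ne (x : Polynomial ℂ) 0 with h | h
  · simp [h]
  · rw [Polynomial.degree_eq_natDegree h] at hx ⊢
    exact_mod_cast Nat.lt_succ_iff.mp (by exact_mod_cast hx)

lemma pn_eq_sum {n : ℕ} (x : Pn n) :
    x = ∑ j ∈ Finset.range (n+1), (((x : Polynomial ℂ).coeff j) * (j.factorial : ℂ)) • phi' n j := by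
  apply Subtype.coe_injective
  have h2 : ((( ∑ j ∈ Finset.range (n+1), (((x : Polynomial ℂ).coeff j) * (j.factorial : ℂ)) • phi' n j : Pn n)) : Polynomial ℂ)
      = ∑ j ∈ Finset.range (n+1), Polynomial.monomial j ((x : Polynomial ℂ).coeff j) := by
    push_cast [Submodule.coe_sum]
    refine Finset.sum_congr rfl fun j hj => ?_
    rw [coe_phi' (Nat.lt_succ_iff.mp (Finset.mem_range.mp hj))]
    rw [Polynomial.smul_eq_C_mul, ← Polynomial.C_mul_X_pow_eq_monomial]
    rw [← mul_assoc, ← Polynomial.C_mul]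
    congr 2
    have : (j.factorial : ℂ) ≠ 0 := Nat.cast_ne_zero.mpr (Nat.factorial_ne_zero j)
    field_simp
  show (x : Polynomial ℂ) = _
  rw [show ((fun a => ((a : Pn n) : Polynomial ℂ)) (∑ j ∈ Finset.range (n+1), (((x : Polynomial ℂ).coeff j) * (j.factorial : ℂ)) • phi' n j)) = _ from h2]
  exact Polynomial.as_sum_range' (x : Polynomial ℂ) (n+1) (Nat.lt_succ_of_le (natDegree_le_of_mem x))

lemma coeF (n m : ℕ) (hm : m ≤ n) (t : ℂ) :
    (((∑ j ∈ range (m+1), ((-t)^(m-j) / ((m-j).factorial : ℂ)) • phi' n j) : Pn n) : Polynomial ℂ)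
      = C ((m.factorial : ℂ))⁻¹ * (X - C t) ^ m := by
  have expand : (X - C t) ^ m = ∑ k ∈ range (m+1), X ^ k * (C (-t)) ^ (m-k) * (m.choose k : Polynomial ℂ) := by
    rw [sub_eq_add_neg, ← Polynomial.C_neg, add_pow]
  rw [expand, Finset.mul_sum]
  push_cast [Submodule.coe_sum]
  refine Finset.sum_congr rfl fun j hj => ?_
  have hjn : j ≤ n := le_trans (Nat.lt_succ_iff.mp (Finset.mem_range.mp hj)) hm
  have hjm : j ≤ m := Nat.lt_succ_iff.mp (Finset.mem_range.mp hj)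
  rw [coe_phi' hjn, Polynomial.smul_eq_C_mul, ← Polynomial.C_pow]
  have hj0 : (j.factorial : ℂ) ≠ 0 := Nat.cast_ne_zero.mpr (Nat.factorial_ne_zero _)
  have hmj0 : (((m-j).factorial : ℂ)) ≠ 0 := Nat.cast_ne_zero.mpr (Nat.factorial_ne_zero _)
  have hm0 : ((m.factorial : ℂ)) ≠ 0 := Nat.cast_ne_zero.mpr (Nat.factorial_ne_zero _)
  have h1' : (m.choose j : ℂ) * (j.factorial : ℂ) * ((m - j).factorial : ℂ) = (m.factorial : ℂ) := by
    exact_mod_cast congrArg (Nat.cast : ℕ → ℂ) (Nat.choose_mul_factorial_mul_factorial hjm)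
  have key : (-t) ^ (m - j) / ((m - j).factorial : ℂ) * ((j.factorial : ℂ))⁻¹
      = ((m.factorial : ℂ))⁻¹ * ((-t) ^ (m - j) * (m.choose j : ℂ)) := by
    rw [← h1']
    have hc0 : (m.choose j : ℂ) ≠ 0 := Nat.cast_ne_zero.mpr (Nat.choose_pos hjm).ne'
    field_simp
  rw [← Polynomial.C_eq_natCast]
  trans (C ((-t) ^ (m - j) / ((m - j).factorial : ℂ) * ((j.factorial : ℂ))⁻¹) * X ^ j)
  · rw [Polynomial.C_mul]; ring
  · rw [key, Polynomial.C_mul, Polynomial.C_mul]; ring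

noncomputable def Complex.abs : AbsoluteValue ℂ ℝ :=
  IsAbsoluteValue.toAbsoluteValue (norm : ℂ → ℝ)

lemma Complex.abs_ofReal (r : ℝ) : Complex.abs (r : ℂ) = |r| := by
  show ‖(r : ℂ)‖ = |r|
  simp

lemma Complex.abs_natCast (k : ℕ) : Complex.abs (k : ℂ) = k := by
  show ‖(k : ℂ)‖ = k
  simp

lemma abs_pow_sub_pow_le' (x y : ℂ) (R : ℝ) (N : ℕ) (hx : Complex.abs x ≤ R)
    (hy : Complex.abs y ≤ R) :
    Complex.abs (x ^ N - y ^ N) ≤ N * R ^ (N - 1) * Complex.abs (x - y) := by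
  have hR : 0 ≤ R := le_trans (Complex.abs.nonneg x) hx
  rw [← geom_sum₂_mul, map_mul]
  have hsum : Complex.abs (∑ i ∈ range N, x ^ i * y ^ (N - 1 - i)) ≤ N * R ^ (N - 1) := by
    calc Complex.abs (∑ i ∈ range N, x ^ i * y ^ (N - 1 - i))
        ≤ ∑ i ∈ range N, Complex.abs (x ^ i * y ^ (N - 1 - i)) := by
          exact AbsoluteValue.sum_le _ _ _
      _ ≤ ∑ i ∈ range N, R ^ (N - 1) := by
          refine Finset.sum_le_sum fun i hi => ?_
          rw [map_mul, map_pow, map_pow]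
          calc Complex.abs x ^ i * Complex.abs y ^ (N - 1 - i)
              ≤ R ^ i * R ^ (N - 1 - i) := by
                exact mul_le_mul (pow_le_pow_left₀ (Complex.abs.nonneg x) hx i)
                  (pow_le_pow_left₀ (Complex.abs.nonneg y) hy _)
                  (pow_nonneg (Complex.abs.nonneg y) _) (pow_nonneg hR i)
            _ = R ^ (N - 1) := by
                rw [← pow_add]; congr 1
                have := Finset.mem_range.mp hi; omega
      _ = N * R ^ (N - 1) := by rw [Finset.sum_const, Finset.card_range, nsmul_eq_mul]
  exact mul_le_mul_of_nonneg_right hsum (Complex.abs.nonneg _)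

set_option maxHeartbeats 1000000 in
lemma ML (n : ℕ) (T : Module.End ℂ (Pn n)) (C : ℝ) (hC : 0 < C)
    (hyp : ∀ f : Pn n, 0 < (f : Polynomial ℂ).degree →
      ∃ u v, (f : Polynomial ℂ).IsRoot u ∧ ((T f : Pn n) : Polynomial ℂ).IsRoot v ∧
        Complex.abs (u - v) ≤ C)
    (p : ℕ → Polynomial ℂ)
    (hp : ∀ j (hj : j ≤ n), p j = ((T (phiP n j hj) : Pn n) : Polynomial ℂ))
    (m : ℕ) (hm1 : 1 ≤ m) (hmn : m ≤ n) (s : ℕ)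
    (hbound : ∀ j, j ≤ m → ∀ k, j + s < k → (p j).coeff k = 0)
    (hc : (∑ j ∈ range (m+1), ((-1 : ℂ))^(m-j) / ((m-j).factorial : ℂ) * (p j).coeff (j+s)) ≠ 0) :
    False := by
  obtain ⟨c, hcdef⟩ : ∃ x : ℂ, x = ∑ j ∈ range (m+1), ((-1 : ℂ))^(m-j) / ((m-j).factorial : ℂ) * (p j).coeff (j+s) := ⟨_, rfl⟩
  rw [← hcdef] at hc
  have habs : 0 < Complex.abs c := by
    simpa [Complex.abs.pos_iff] using hc
  obtain ⟨Aj, hAjdef⟩ : ∃ g : ℕ → ℝ, g = fun j =>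
    (∑ k ∈ range (j+s), Complex.abs ((p j).coeff k)) + C * (j+s) * Complex.abs ((p j).coeff (j+s)) := ⟨_, rfl⟩
  have hAj0 : ∀ j, 0 ≤ Aj j := by
    intro j
    simp only [hAjdef]
    have : 0 ≤ ∑ k ∈ range (j+s), Complex.abs ((p j).coeff k) :=
      Finset.sum_nonneg fun k _ => Complex.abs.nonneg _
    have h2 : 0 ≤ C * (j+s) * Complex.abs ((p j).coeff (j+s)) := by positivity
    linarith
  obtain ⟨A, hAdef⟩ : ∃ x : ℝ, x = ∑ j ∈ range (m+1), Aj j := ⟨_, rfl⟩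
  have hA0 : 0 ≤ A := by rw [hAdef]; exact Finset.sum_nonneg fun j _ => hAj0 j
  obtain ⟨t, htdef⟩ : ∃ x : ℝ, x = max C 1 + A * 2^(m+s) / Complex.abs c + 1 := ⟨_, rfl⟩
  have ht1 : 1 ≤ t := by
    have : (0:ℝ) ≤ A * 2^(m+s) / Complex.abs c := by positivity
    have h2 : (1:ℝ) ≤ max C 1 := le_max_right _ _
    rw [htdef]; linarith
  have htC : C ≤ t := by
    have : (0:ℝ) ≤ A * 2^(m+s) / Complex.abs c := by positivity
    have h2 : C ≤ max C 1 := le_max_left _ _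
    rw [htdef]; linarith
  have ht0 : 0 < t := lt_of_lt_of_le one_pos ht1
  have htkey : A * 2^(m+s) < Complex.abs c * t := by
    have h1 : Complex.abs c * (A * 2^(m+s) / Complex.abs c) = A * 2^(m+s) := by
      field_simp
    have h2 : 0 < Complex.abs c * (max C 1 + 1) := by positivity
    calc A * 2^(m+s) = Complex.abs c * (A * 2^(m+s) / Complex.abs c) := h1.symm
      _ < Complex.abs c * (A * 2^(m+s) / Complex.abs c) + Complex.abs c * (max C 1 + 1) := by linarith
      _ = Complex.abs c * t := by rw [htdef]; ring
  -- the test polynomial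
  obtain ⟨F, hFdef⟩ : ∃ x : Pn n, x = ∑ j ∈ range (m+1), ((-(t:ℂ))^(m-j) / ((m-j).factorial : ℂ)) • phi' n j := ⟨_, rfl⟩
  have hF : ((F : Pn n) : Polynomial ℂ) = Polynomial.C ((m.factorial : ℂ))⁻¹ * (X - Polynomial.C (t:ℂ)) ^ m := by
    rw [hFdef]; exact coeF n m hmn (t:ℂ)
  have hm0C : ((m.factorial : ℂ)) ≠ 0 := Nat.cast_ne_zero.mpr (Nat.factorial_ne_zero _)
  have hdeg : 0 < ((F : Pn n) : Polynomial ℂ).degree := by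
    rw [hF]
    rw [Polynomial.degree_C_mul (inv_ne_zero hm0C), Polynomial.degree_pow, Polynomial.degree_X_sub_C]
    simpa using by exact_mod_cast Nat.pos_of_ne_zero (by omega : m ≠ 0)
  obtain ⟨u, v, hu, hv, huv⟩ := hyp F hdeg
  have hut : u = (t:ℂ) := by
    rw [hF] at hu
    simp only [Polynomial.IsRoot, Polynomial.eval_mul, Polynomial.eval_pow, Polynomial.eval_C,
      Polynomial.eval_sub, Polynomial.eval_X, mul_eq_zero, inv_eq_zero] at hu
    rcases hu with h | h
    · exact absurd h hm0C
    · have := pow_eq_zero_iff (by omega : m ≠ 0) |>.mp h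
      exact sub_eq_zero.mp this
  have hTF : ((T F : Pn n) : Polynomial ℂ)
      = ∑ j ∈ range (m+1), Polynomial.C ((-(t:ℂ))^(m-j) / ((m-j).factorial : ℂ)) * p j := by
    rw [hFdef, map_sum]
    push_cast [Submodule.coe_sum]
    refine Finset.sum_congr rfl fun j hj => ?_
    have hjn : j ≤ n := le_trans (Nat.lt_succ_iff.mp (Finset.mem_range.mp hj)) hmn
    rw [map_smul]
    have : T (phi' n j) = T (phiP n j hjn) := by rw [phi', dif_pos hjn]
    rw [this]
    rw [Submodule.coe_smul, Polynomial.smul_eq_C_mul, ← hp j hjn]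
  have hveval : ∑ j ∈ range (m+1), ((-(t:ℂ))^(m-j) / ((m-j).factorial : ℂ)) * Polynomial.eval v (p j) = 0 := by
    have := hv
    rw [Polynomial.IsRoot, hTF, Polynomial.eval_finset_sum] at this
    simpa [Polynomial.eval_mul] using this
  -- root of F is t, so v is within C of t
  have hw : Complex.abs (v - (t:ℂ)) ≤ C := by
    rw [hut] at huv
    rwa [← AbsoluteValue.map_neg Complex.abs, neg_sub] at huv
  have habsv : Complex.abs v ≤ t + C := by
    calc Complex.abs v = Complex.abs ((t:ℂ) + (v - (t:ℂ))) := by ring_nf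
      _ ≤ Complex.abs ((t:ℂ)) + Complex.abs (v - (t:ℂ)) := Complex.abs.add_le _ _
      _ ≤ t + C := by
          rw [Complex.abs_ofReal, abs_of_pos ht0]
          linarith
  have hnd : ∀ j, j ≤ m → Polynomial.eval v (p j) = ∑ k ∈ range (j+s+1), (p j).coeff k * v^k := by
    intro j hj
    exact Polynomial.eval_eq_sum_range'
      (Nat.lt_succ_of_le (Polynomial.natDegree_le_iff_coeff_eq_zero.mpr
        (fun N hN => hbound j hj N hN))) v
  obtain ⟨E, hEdef⟩ : ∃ g : ℕ → ℂ, g = fun j =>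
      (∑ k ∈ range (j+s+1), (p j).coeff k * v^k) - (p j).coeff (j+s) * (t:ℂ)^(j+s) := ⟨_, rfl⟩
  have hsplit : c * (t:ℂ)^(m+s)
      + ∑ j ∈ range (m+1), ((-(t:ℂ))^(m-j) / ((m-j).factorial : ℂ)) * E j = 0 := by
    rw [← hveval, hcdef, Finset.sum_mul, ← Finset.sum_add_distrib]
    refine Finset.sum_congr rfl fun j hj => ?_
    have hjm : j ≤ m := Nat.lt_succ_iff.mp (Finset.mem_range.mp hj)
    rw [hnd j hjm]
    simp only [hEdef]
    have hexp : (m-j) + (j+s) = m+s := by omega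
    have h1 : (-(t:ℂ))^(m-j) = (-1)^(m-j) * (t:ℂ)^(m-j) := by rw [neg_pow]
    have h2 : (t:ℂ)^(m+s) = (t:ℂ)^(m-j) * (t:ℂ)^(j+s) := by rw [← pow_add, hexp]
    rw [h1, h2]
    ring
  have hR1 : (1:ℝ) ≤ t + C := by linarith
  have hR0 : (0:ℝ) ≤ t + C := by linarith
  have hEbound : ∀ j ∈ range (m+1),
      Complex.abs (((-(t:ℂ))^(m-j) / ((m-j).factorial : ℂ)) * E j) ≤ Aj j * (t + C)^(m+s-1) := by
    intro j hj
    have hjm : j ≤ m := Nat.lt_succ_iff.mp (Finset.mem_range.mp hj)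
    have hAjnn := hAj0 j
    have hcoefabs : Complex.abs ((-(t:ℂ))^(m-j) / (((m-j).factorial : ℂ))) ≤ t^(m-j) := by
      rw [map_div₀, map_pow, AbsoluteValue.map_neg, Complex.abs_ofReal, abs_of_pos ht0,
        Complex.abs_natCast]
      have h1 : (1:ℝ) ≤ ((m-j).factorial : ℝ) := by exact_mod_cast (m-j).factorial_pos
      exact div_le_self (pow_nonneg ht0.le _) h1
    rcases Nat.eq_zero_or_pos (j+s) with hzero | hpos
    · have hE0 : E j = 0 := by
        simp only [hEdef]
        rw [hzero]
        simp
      rw [hE0, mul_zero, map_zero]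
      positivity
    · have hsum1 : Complex.abs (∑ k ∈ range (j+s), (p j).coeff k * v^k)
          ≤ (∑ k ∈ range (j+s), Complex.abs ((p j).coeff k)) * (t + C)^(j+s-1) := by
        rw [Finset.sum_mul]
        calc Complex.abs (∑ k ∈ range (j+s), (p j).coeff k * v^k)
            ≤ ∑ k ∈ range (j+s), Complex.abs ((p j).coeff k * v^k) :=
              AbsoluteValue.sum_le _ _ _
          _ ≤ ∑ k ∈ range (j+s), Complex.abs ((p j).coeff k) * (t + C)^(j+s-1) := by
              refine Finset.sum_le_sum fun k hk => ?_
              rw [map_mul, map_pow]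
              have hk' : k ≤ j+s-1 := by have := Finset.mem_range.mp hk; omega
              have e1 : Complex.abs v ^ k ≤ (t + C)^k :=
                pow_le_pow_left₀ (Complex.abs.nonneg v) habsv k
              have e2 : (t + C)^k ≤ (t + C)^(j+s-1) := pow_le_pow_right₀ hR1 hk'
              exact mul_le_mul_of_nonneg_left (le_trans e1 e2) (Complex.abs.nonneg _)
      have hsum2 : Complex.abs ((p j).coeff (j+s) * (v^(j+s) - (t:ℂ)^(j+s)))
          ≤ Complex.abs ((p j).coeff (j+s)) * (((j:ℝ)+s) * (t + C)^(j+s-1) * C) := by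
        rw [map_mul]
        refine mul_le_mul_of_nonneg_left ?_ (Complex.abs.nonneg _)
        have hb := abs_pow_sub_pow_le' v (t:ℂ) (t + C) (j+s)
          habsv (by rw [Complex.abs_ofReal, abs_of_pos ht0]; linarith)
        push_cast at hb
        calc Complex.abs (v^(j+s) - (t:ℂ)^(j+s))
            ≤ ((j:ℝ)+s) * (t + C)^(j+s-1) * Complex.abs (v - (t:ℂ)) := hb
          _ ≤ ((j:ℝ)+s) * (t + C)^(j+s-1) * C := by
              refine mul_le_mul_of_nonneg_left hw ?_
              positivity
      have hEj : Complex.abs (E j) ≤ Aj j * (t + C)^(j+s-1) := by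
        simp only [hEdef]
        have hrw : (∑ k ∈ range (j+s+1), (p j).coeff k * v^k) - (p j).coeff (j+s) * (t:ℂ)^(j+s)
            = (∑ k ∈ range (j+s), (p j).coeff k * v^k)
              + (p j).coeff (j+s) * (v^(j+s) - (t:ℂ)^(j+s)) := by
          rw [Finset.sum_range_succ]; ring
        rw [hrw]
        calc Complex.abs ((∑ k ∈ range (j+s), (p j).coeff k * v^k)
              + (p j).coeff (j+s) * (v^(j+s) - (t:ℂ)^(j+s)))
            ≤ Complex.abs (∑ k ∈ range (j+s), (p j).coeff k * v^k)
              + Complex.abs ((p j).coeff (j+s) * (v^(j+s) - (t:ℂ)^(j+s))) := Complex.abs.add_le _ _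
          _ ≤ (∑ k ∈ range (j+s), Complex.abs ((p j).coeff k)) * (t + C)^(j+s-1)
              + Complex.abs ((p j).coeff (j+s)) * (((j:ℝ)+s) * (t + C)^(j+s-1) * C) :=
              add_le_add hsum1 hsum2
          _ = Aj j * (t + C)^(j+s-1) := by
              simp only [hAjdef]
              push_cast
              ring
      calc Complex.abs (((-(t:ℂ))^(m-j) / ((m-j).factorial : ℂ)) * E j)
          = Complex.abs ((-(t:ℂ))^(m-j) / (((m-j).factorial : ℂ))) * Complex.abs (E j) :=
            map_mul _ _ _
        _ ≤ t^(m-j) * (Aj j * (t + C)^(j+s-1)) :=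
            mul_le_mul hcoefabs hEj (Complex.abs.nonneg _) (pow_nonneg ht0.le _)
        _ ≤ (t + C)^(m-j) * (Aj j * (t + C)^(j+s-1)) := by
            refine mul_le_mul_of_nonneg_right (pow_le_pow_left₀ ht0.le (by linarith) _) ?_
            positivity
        _ = Aj j * (t + C)^((m-j) + (j+s-1)) := by rw [pow_add]; ring
        _ = Aj j * (t + C)^(m+s-1) := by congr 2; omega
  -- final contradiction
  have habs_t : Complex.abs ((t:ℂ)^(m+s)) = t^(m+s) := by
    rw [map_pow, Complex.abs_ofReal, abs_of_pos ht0]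
  have hfinal : Complex.abs c * t^(m+s) ≤ A * (t + C)^(m+s-1) := by
    have h1 : c * (t:ℂ)^(m+s)
        = -(∑ j ∈ range (m+1), ((-(t:ℂ))^(m-j) / ((m-j).factorial : ℂ)) * E j) :=
      eq_neg_of_add_eq_zero_left hsplit
    calc Complex.abs c * t^(m+s) = Complex.abs (c * (t:ℂ)^(m+s)) := by rw [map_mul, habs_t]
      _ = Complex.abs (∑ j ∈ range (m+1), ((-(t:ℂ))^(m-j) / ((m-j).factorial : ℂ)) * E j) := by
          rw [h1, AbsoluteValue.map_neg]
      _ ≤ ∑ j ∈ range (m+1), Complex.abs (((-(t:ℂ))^(m-j) / ((m-j).factorial : ℂ)) * E j) :=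
          AbsoluteValue.sum_le _ _ _
      _ ≤ ∑ j ∈ range (m+1), Aj j * (t + C)^(m+s-1) := Finset.sum_le_sum hEbound
      _ = A * (t + C)^(m+s-1) := by rw [hAdef, Finset.sum_mul]
  have h2tC : t + C ≤ 2*t := by linarith
  have hpow : (t + C)^(m+s-1) ≤ 2^(m+s) * t^(m+s-1) := by
    calc (t + C)^(m+s-1) ≤ (2*t)^(m+s-1) := pow_le_pow_left₀ hR0 h2tC _
      _ = 2^(m+s-1) * t^(m+s-1) := mul_pow _ _ _
      _ ≤ 2^(m+s) * t^(m+s-1) := by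
          refine mul_le_mul_of_nonneg_right (pow_le_pow_right₀ one_le_two (by omega)) ?_
          positivity
  have hts : t^(m+s) = t^(m+s-1) * t := by
    rw [← pow_succ]
    congr 1
    omega
  have htp : 0 < t^(m+s-1) := pow_pos ht0 _
  have hchain : (Complex.abs c * t) * t^(m+s-1) ≤ (A * 2^(m+s)) * t^(m+s-1) := by
    calc (Complex.abs c * t) * t^(m+s-1) = Complex.abs c * t^(m+s) := by rw [hts]; ring
      _ ≤ A * (t + C)^(m+s-1) := hfinal
      _ ≤ A * (2^(m+s) * t^(m+s-1)) := mul_le_mul_of_nonneg_left hpow hA0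
      _ = (A * 2^(m+s)) * t^(m+s-1) := by ring
  have : Complex.abs c * t ≤ A * 2^(m+s) := le_of_mul_le_mul_right hchain htp
  linarith

set_option maxHeartbeats 1000000 in
lemma stepA (n : ℕ) (T : Module.End ℂ (Pn n)) (hT : T ≠ 0) (C : ℝ) (hC : 0 < C)
    (hyp : ∀ f : Pn n, 0 < (f : Polynomial ℂ).degree →
      ∃ u v, (f : Polynomial ℂ).IsRoot u ∧ ((T f : Pn n) : Polynomial ℂ).IsRoot v ∧
        Complex.abs (u - v) ≤ C)
    (p : ℕ → Polynomial ℂ)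
    (hp : ∀ j (hj : j ≤ n), p j = ((T (phiP n j hj) : Pn n) : Polynomial ℂ)) :
    p 0 ≠ 0 := by
  classical
  -- some p j with j ≤ n is nonzero
  have hex : ∃ j, j ≤ n ∧ p j ≠ 0 := by
    by_contra hall
    push_neg at hall
    apply hT
    ext x
    have hx := pn_eq_sum x
    have hTx : T x = ∑ j ∈ Finset.range (n+1),
        (((x : Polynomial ℂ).coeff j) * (j.factorial : ℂ)) • T (phi' n j) := by
      conv_lhs => rw [hx]
      rw [map_sum]
      exact Finset.sum_congr rfl fun j hj => map_smul _ _ _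
    rw [hTx]
    have hz : ∀ j ∈ Finset.range (n+1), (((x : Polynomial ℂ).coeff j) * (j.factorial : ℂ)) • T (phi' n j) = 0 := by
      intro j hj
      have hjn : j ≤ n := Nat.lt_succ_iff.mp (Finset.mem_range.mp hj)
      have h1 : T (phi' n j) = 0 := by
        have h2 : phi' n j = phiP n j hjn := by rw [phi', dif_pos hjn]
        apply Subtype.coe_injective
        show ((T (phi' n j) : Pn n) : Polynomial ℂ) = ((0 : Pn n) : Polynomial ℂ)
        rw [h2, ← hp j hjn, hall j hjn]
        simp
      rw [h1, smul_zero]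
    rw [Finset.sum_congr rfl hz]
    simp
  by_contra h0
  have hex' : ∃ j, p j ≠ 0 := ⟨hex.choose, hex.choose_spec.2⟩
  set j₀ := Nat.find hex' with hj₀def
  have hj₀ : p j₀ ≠ 0 := Nat.find_spec hex'
  have hj₀n : j₀ ≤ n := le_trans (Nat.find_min' hex' hex.choose_spec.2) hex.choose_spec.1
  have hj₀1 : 1 ≤ j₀ := by
    rcases Nat.eq_zero_or_pos j₀ with h | h
    · exact absurd (h ▸ hj₀) (not_not_intro h0)
    · exact h
  -- bound on roots of p j₀
  set B : ℝ := ((p j₀).roots.map Complex.abs).sum with hBdef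
  have hB0 : 0 ≤ B := Multiset.sum_nonneg (by
    intro x hx
    obtain ⟨a, _, rfl⟩ := Multiset.mem_map.mp hx
    exact Complex.abs.nonneg a)
  set t : ℝ := B + C + 1 with htdef
  have ht0 : 0 < t := by positivity
  obtain ⟨F, hFdef⟩ : ∃ x : Pn n,
      x = ∑ j ∈ Finset.range (j₀+1), ((-(t:ℂ))^(j₀-j) / ((j₀-j).factorial : ℂ)) • phi' n j := ⟨_, rfl⟩
  have hF : ((F : Pn n) : Polynomial ℂ)
      = Polynomial.C ((j₀.factorial : ℂ))⁻¹ * (X - Polynomial.C (t:ℂ)) ^ j₀ := by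
    rw [hFdef]; exact coeF n j₀ hj₀n (t:ℂ)
  have hfact : ((j₀.factorial : ℂ)) ≠ 0 := Nat.cast_ne_zero.mpr (Nat.factorial_ne_zero _)
  have hdeg : 0 < ((F : Pn n) : Polynomial ℂ).degree := by
    rw [hF, Polynomial.degree_C_mul (inv_ne_zero hfact), Polynomial.degree_pow,
      Polynomial.degree_X_sub_C]
    simpa using by exact_mod_cast Nat.pos_of_ne_zero (by omega : j₀ ≠ 0)
  have hTF : ((T F : Pn n) : Polynomial ℂ) = p j₀ := by
    have : ((T F : Pn n) : Polynomial ℂ)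
        = ∑ j ∈ Finset.range (j₀+1), Polynomial.C ((-(t:ℂ))^(j₀-j) / ((j₀-j).factorial : ℂ)) * p j := by
      rw [hFdef, map_sum]
      push_cast [Submodule.coe_sum]
      refine Finset.sum_congr rfl fun j hj => ?_
      have hjn : j ≤ n := le_trans (Nat.lt_succ_iff.mp (Finset.mem_range.mp hj)) hj₀n
      rw [map_smul]
      have h2 : T (phi' n j) = T (phiP n j hjn) := by rw [phi', dif_pos hjn]
      rw [h2, Submodule.coe_smul, Polynomial.smul_eq_C_mul, ← hp j hjn]
    rw [this, Finset.sum_eq_single_of_mem j₀ (Finset.self_mem_range_succ j₀)]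
    · simp
    · intro j hj hne
      have hjlt : j < j₀ := by
        have := Nat.lt_succ_iff.mp (Finset.mem_range.mp hj)
        omega
      have : p j = 0 := by
        by_contra hne'
        exact absurd (Nat.find_min' hex' hne') (by omega)
      rw [this, mul_zero]
  obtain ⟨u, v, hu, hv, huv⟩ := hyp F hdeg
  have hut : u = (t:ℂ) := by
    rw [hF] at hu
    simp only [Polynomial.IsRoot, Polynomial.eval_mul, Polynomial.eval_pow, Polynomial.eval_C,
      Polynomial.eval_sub, Polynomial.eval_X, mul_eq_zero, inv_eq_zero] at hu
    rcases hu with h | h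
    · exact absurd h hfact
    · exact sub_eq_zero.mp (pow_eq_zero_iff (by omega : j₀ ≠ 0) |>.mp h)
  rw [hTF] at hv
  have hvroot : v ∈ (p j₀).roots := (Polynomial.mem_roots hj₀).mpr hv
  have hvB : Complex.abs v ≤ B := by
    rw [hBdef]
    exact Multiset.single_le_sum (by
      intro x hx
      obtain ⟨a, _, rfl⟩ := Multiset.mem_map.mp hx
      exact Complex.abs.nonneg a) _ (Multiset.mem_map_of_mem _ hvroot)
  have : Complex.abs (u - v) > C := by
    rw [hut]
    have h1 : Complex.abs ((t:ℂ)) ≤ Complex.abs ((t:ℂ) - v) + Complex.abs v := by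
      calc Complex.abs ((t:ℂ)) = Complex.abs (((t:ℂ) - v) + v) := by ring_nf
        _ ≤ _ := Complex.abs.add_le _ _
    have h2 : Complex.abs ((t:ℂ)) = t := by rw [Complex.abs_ofReal, abs_of_pos ht0]
    rw [h2] at h1
    have : t - B ≤ Complex.abs ((t:ℂ) - v) := by linarith
    rw [htdef] at this
    linarith
  linarith

lemma altsum (m : ℕ) (hm : 1 ≤ m) :
    (∑ j ∈ Finset.range (m+1), ((-1:ℂ))^(m-j) / (((m-j).factorial : ℂ) * (j.factorial : ℂ))) = 0 := by
  have hint : (∑ i ∈ Finset.range (m+1), (-1:ℤ)^i * (m.choose i)) = 0 := by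
    rw [Int.alternating_sum_range_choose]
    simp [Nat.one_le_iff_ne_zero.mp hm]
  have hCsum : (∑ i ∈ Finset.range (m+1), (-1:ℂ)^i * (m.choose i : ℂ)) = 0 := by
    exact_mod_cast congrArg (Int.cast : ℤ → ℂ) hint
  have hm0 : ((m.factorial : ℂ)) ≠ 0 := Nat.cast_ne_zero.mpr (Nat.factorial_ne_zero _)
  have step : ∀ j ∈ Finset.range (m+1),
      ((-1:ℂ))^(m-j) / (((m-j).factorial : ℂ) * (j.factorial : ℂ))
        = ((-1:ℂ)^m / (m.factorial : ℂ)) * ((-1:ℂ)^j * (m.choose j : ℂ)) := by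
    intro j hj
    have hjm : j ≤ m := Nat.lt_succ_iff.mp (Finset.mem_range.mp hj)
    have h1 : ((-1:ℂ))^(m-j) = (-1:ℂ)^m * (-1:ℂ)^j := by
      rw [← pow_add, show m + j = (m - j) + 2*j from by omega, pow_add, pow_mul]
      simp
    have h2 : (m.choose j : ℂ) * (j.factorial : ℂ) * ((m - j).factorial : ℂ) = (m.factorial : ℂ) := by
      exact_mod_cast congrArg (Nat.cast : ℕ → ℂ) (Nat.choose_mul_factorial_mul_factorial hjm)
    have hj0 : (j.factorial : ℂ) ≠ 0 := Nat.cast_ne_zero.mpr (Nat.factorial_ne_zero _)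
    have hmj0 : (((m-j).factorial : ℂ)) ≠ 0 := Nat.cast_ne_zero.mpr (Nat.factorial_ne_zero _)
    have hc0 : (m.choose j : ℂ) ≠ 0 := Nat.cast_ne_zero.mpr (Nat.choose_pos hjm).ne'
    rw [h1, ← h2]
    field_simp
  rw [Finset.sum_congr rfl step, ← Finset.mul_sum, hCsum, mul_zero]

set_option maxHeartbeats 1600000 in
/-- If a nonzero linear operator `T` on `P_n` is such that for some `C > 0` every
nonconstant `f ∈ P_n` has a root within distance `C` of some root of `Tf`, then
`deg(Tφ_m) = m` for every `m ≤ n`; in particular the matrix of `T` in the basis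
`{φ_0, …, φ_n}` is upper triangular with all diagonal entries equal to the nonzero
constant `Tφ_0` (the diagonal entry being `m! ⬝ (coeff m of Tφ_m)`). -/
theorem deg_T_phi_eq_and_diag_const (n : ℕ) (hn : 0 < n)
    (T : Module.End ℂ (Pn n)) (hT : T ≠ 0) (C : ℝ) (hC : 0 < C)
    (hyp : ∀ f : Pn n, 0 < (f : Polynomial ℂ).degree →
      ∃ u v, (f : Polynomial ℂ).IsRoot u ∧ ((T f : Pn n) : Polynomial ℂ).IsRoot v ∧
        ‖u - v‖ ≤ C) :
    ∃ a₀ : ℂ, a₀ ≠ 0 ∧ T (phiP n 0 (Nat.zero_le n)) = a₀ • phiP n 0 (Nat.zero_le n) ∧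
      ∀ m (h : m ≤ n),
        ((T (phiP n m h) : Pn n) : Polynomial ℂ).degree = (m : ℕ) ∧
        (Nat.factorial m : ℂ) * ((T (phiP n m h) : Pn n) : Polynomial ℂ).coeff m = a₀ := by
  classical
  obtain ⟨p, hp⟩ : ∃ p : ℕ → Polynomial ℂ, ∀ j (hj : j ≤ n),
      p j = ((T (phiP n j hj) : Pn n) : Polynomial ℂ) :=
    ⟨fun j => if h : j ≤ n then ((T (phiP n j h) : Pn n) : Polynomial ℂ) else 0,
      fun j hj => by simp only [dif_pos hj]⟩
  have hp0 : p 0 ≠ 0 := stepA n T hT C hC hyp p hp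
  -- maximal excess
  obtain ⟨σ, hσdef⟩ : ∃ x : ℕ, x = Finset.sup (Finset.range (n+1)) (fun j => (p j).natDegree - j) :=
    ⟨_, rfl⟩
  have hbound : ∀ j, j ≤ n → ∀ k, j + σ < k → (p j).coeff k = 0 := by
    intro j hj k hk
    apply Polynomial.coeff_eq_zero_of_natDegree_lt
    have h1 : (p j).natDegree - j ≤ σ := by
      rw [hσdef]
      exact Finset.le_sup (f := fun j => (p j).natDegree - j) (Finset.mem_range.mpr (Nat.lt_succ_of_le hj))
    omega
  have hnd : ∀ j, j ≤ n → (p j).natDegree ≤ j + σ := by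
    intro j hj
    exact Polynomial.natDegree_le_iff_coeff_eq_zero.mpr (fun N hN => hbound j hj N hN)
  -- a witness attaining the excess
  have hex : ∃ j, j ≤ n ∧ (p j).coeff (j + σ) ≠ 0 := by
    rcases Nat.eq_zero_or_pos σ with h0 | hpos
    · refine ⟨0, Nat.zero_le n, ?_⟩
      have h1 : (p 0).natDegree = 0 := Nat.le_zero.mp (by simpa [h0] using hnd 0 (Nat.zero_le n))
      have h2 : (p 0).coeff 0 ≠ 0 := by
        intro hcc
        apply hp0
        rw [Polynomial.eq_C_of_natDegree_le_zero (le_of_eq h1), hcc, map_zero]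
      simpa [h0] using h2
    · obtain ⟨j, hjmem, hjeq⟩ := Finset.exists_mem_eq_sup (Finset.range (n+1))
        ⟨0, Finset.mem_range.mpr (Nat.succ_pos n)⟩ (fun j => (p j).natDegree - j)
      rw [← hσdef] at hjeq
      have hjn : j ≤ n := Nat.lt_succ_iff.mp (Finset.mem_range.mp hjmem)
      have hpj : p j ≠ 0 := by
        intro hz
        rw [hz] at hjeq
        simp at hjeq
        omega
      have hdeg : (p j).natDegree = j + σ := by
        have := hnd j hjn
        omega
      refine ⟨j, hjn, ?_⟩
      rw [← hdeg]
      exact Polynomial.leadingCoeff_ne_zero.mpr hpj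
  have hex' : ∃ j, (p j).coeff (j + σ) ≠ 0 := ⟨hex.choose, hex.choose_spec.2⟩
  obtain ⟨jm, hjmdef⟩ : ∃ x : ℕ, x = Nat.find hex' := ⟨_, rfl⟩
  have hjm : (p jm).coeff (jm + σ) ≠ 0 := hjmdef ▸ Nat.find_spec hex'
  have hjmn : jm ≤ n := hjmdef ▸ le_trans (Nat.find_min' hex' hex.choose_spec.2) hex.choose_spec.1
  have hjmmin : ∀ j, j < jm → (p j).coeff (j + σ) = 0 := by
    intro j hj
    by_contra hne
    exact absurd (Nat.find_min' hex' hne) (by omega)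
  -- jm must be 0
  have hjm0 : jm = 0 := by
    by_contra hne
    apply ML n T C hC hyp p hp jm (by omega) hjmn σ
      (fun j hj k hk => hbound j (le_trans hj hjmn) k hk)
    rw [Finset.sum_eq_single_of_mem jm (Finset.self_mem_range_succ jm)]
    · simpa using hjm
    · intro j hj hne'
      have : j < jm := by
        have := Nat.lt_succ_iff.mp (Finset.mem_range.mp hj)
        omega
      rw [hjmmin j this, mul_zero]
  have hb0 : (p 0).coeff σ ≠ 0 := by simpa [hjm0] using hjm
  obtain ⟨b₀, hb₀def⟩ : ∃ x : ℂ, x = (p 0).coeff σ := ⟨_, rfl⟩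
  have hb₀ : b₀ ≠ 0 := hb₀def ▸ hb0
  -- the recursion
  have hrec : ∀ m, 1 ≤ m → m ≤ n →
      (∑ j ∈ Finset.range (m+1), ((-1 : ℂ))^(m-j) / ((m-j).factorial : ℂ) * (p j).coeff (j+σ)) = 0 := by
    intro m hm1 hmn
    by_contra hne
    exact ML n T C hC hyp p hp m hm1 hmn σ
      (fun j hj k hk => hbound j (le_trans hj hmn) k hk) hne
  -- coefficients along the diagonal
  have hdiag : ∀ m, m ≤ n → (p m).coeff (m + σ) = b₀ * ((m.factorial : ℂ))⁻¹ := by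
    intro m
    induction m using Nat.strong_induction_on with
    | _ m ih =>
      intro hmn
      rcases Nat.eq_zero_or_pos m with h0 | hpos
      · subst h0
        simp [← hb₀def]
      · have hsum := hrec m hpos hmn
        rw [Finset.sum_range_succ] at hsum
        have hlast : ((-1 : ℂ))^(m-m) / ((m-m).factorial : ℂ) * (p m).coeff (m+σ)
            = (p m).coeff (m+σ) := by simp
        rw [hlast] at hsum
        have hprev : ∀ j ∈ Finset.range m,
            ((-1 : ℂ))^(m-j) / ((m-j).factorial : ℂ) * (p j).coeff (j+σ)
              = b₀ * (((-1 : ℂ))^(m-j) / (((m-j).factorial : ℂ) * (j.factorial : ℂ))) := by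
          intro j hj
          have hjlt : j < m := Finset.mem_range.mp hj
          rw [ih j hjlt (by omega)]
          have h1 : (((m-j).factorial : ℂ)) ≠ 0 := Nat.cast_ne_zero.mpr (Nat.factorial_ne_zero _)
          have h2 : ((j.factorial : ℂ)) ≠ 0 := Nat.cast_ne_zero.mpr (Nat.factorial_ne_zero _)
          field_simp
        rw [Finset.sum_congr rfl hprev, ← Finset.mul_sum] at hsum
        have halt := altsum m hpos
        rw [Finset.sum_range_succ] at halt
        have hmm : ((-1 : ℂ))^(m-m) / (((m-m).factorial : ℂ) * ((m.factorial : ℂ))) 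
            = ((m.factorial : ℂ))⁻¹ := by simp [one_div]
        rw [hmm] at halt
        have hS : (∑ j ∈ Finset.range m, ((-1:ℂ))^(m-j) / (((m-j).factorial : ℂ) * (j.factorial : ℂ)))
            = -((m.factorial : ℂ))⁻¹ := by linear_combination halt
        rw [hS] at hsum
        linear_combination hsum
  -- σ = 0
  have hσ0 : σ = 0 := by
    by_contra hne
    have h1 : (p n).coeff (n + σ) = b₀ * ((n.factorial : ℂ))⁻¹ := hdiag n le_rfl
    have h2 : (p n).coeff (n + σ) = 0 := by
      apply Polynomial.coeff_eq_zero_of_natDegree_lt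
      have h3 : (p n).natDegree ≤ n := by
        rw [hp n le_rfl]
        exact natDegree_le_of_mem _
      omega
    rw [h2] at h1
    have hfac : ((n.factorial : ℂ)) ≠ 0 := Nat.cast_ne_zero.mpr (Nat.factorial_ne_zero _)
    apply hb₀
    have h4 : b₀ * ((n.factorial : ℂ))⁻¹ = 0 := h1.symm
    rcases mul_eq_zero.mp h4 with h5 | h5
    · exact h5
    · exact absurd h5 (inv_ne_zero hfac)
  subst hσ0
  -- final assembly
  refine ⟨b₀, hb₀, ?_, ?_⟩
  · apply Subtype.coe_injective
    show ((T (phiP n 0 (Nat.zero_le n)) : Pn n) : Polynomial ℂ) = ((b₀ • phiP n 0 (Nat.zero_le n) : Pn n) : Polynomial ℂ)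
    rw [← hp 0 (Nat.zero_le n)]
    have h1 : (p 0).natDegree = 0 := Nat.le_zero.mp (by simpa using hnd 0 (Nat.zero_le n))
    have h2 : p 0 = Polynomial.C b₀ := by
      rw [Polynomial.eq_C_of_natDegree_le_zero (le_of_eq h1)]
      congr 1
      rw [hb₀def]
    rw [h2, Submodule.coe_smul]
    simp [phiP, Polynomial.smul_eq_C_mul]
  · intro m h
    have hcoeff : ((T (phiP n m h) : Pn n) : Polynomial ℂ).coeff m = b₀ * ((m.factorial : ℂ))⁻¹ := by
      rw [← hp m h]
      simpa using hdiag m h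
    have hfact : ((m.factorial : ℂ)) ≠ 0 := Nat.cast_ne_zero.mpr (Nat.factorial_ne_zero _)
    have hcne : ((T (phiP n m h) : Pn n) : Polynomial ℂ).coeff m ≠ 0 := by
      rw [hcoeff]
      exact mul_ne_zero hb₀ (inv_ne_zero hfact)
    constructor
    · have hle : ((T (phiP n m h) : Pn n) : Polynomial ℂ).natDegree ≤ m := by
        rw [← hp m h]
        simpa using hnd m h
      have hge : m ≤ ((T (phiP n m h) : Pn n) : Polynomial ℂ).natDegree :=
        Polynomial.le_natDegree_of_ne_zero hcne
      have hne0 : ((T (phiP n m h) : Pn n) : Polynomial ℂ) ≠ 0 := by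
        intro hz
        rw [hz] at hcne
        simp at hcne
      rw [Polynomial.degree_eq_natDegree hne0, le_antisymm hle hge]
    · rw [hcoeff]
      field_simp
end
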